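/- Let A be an n×n real antisymmetric matrix with n odd, and suppose adj(A) ≠ 0. Then there exists a unique (up to sign) vector β ∈ ℝⁿ with adj(A) = β·βᵀ, and β spans the kernel of A. -/

import Mathlib

open Matrix

private lemma dp_self_nonneg {n : ℕ} (z : Fin n → ℝ) : 0 ≤ z ⬝ᵥ z :=
  Finset.sum_nonneg fun i _ => mul_self_nonneg (z i)

private lemma skew_quad {n : ℕ} {A : Matrix (Fin n) (Fin n) ℝ} (hA : Aᵀ = -A)
    (x : Fin n → ℝ) : x ⬝ᵥ A *ᵥ x = 0 := by
  have h : x ⬝ᵥ Aᵀ *ᵥ x = x ⬝ᵥ A *ᵥ x := by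
    rw [dotProduct_mulVec, vecMul_transpose, dotProduct_comm]
  rw [hA] at h
  simp only [neg_mulVec, dotProduct_neg] at h
  linarith

private lemma det_one_add_smul_pos {n : ℕ} {A : Matrix (Fin n) (Fin n) ℝ} (hA : Aᵀ = -A) :
    ∀ s : ℝ, 0 ≤ s → 0 < (s • A + 1).det := by
  have hcont : Continuous fun s : ℝ => (s • A + 1).det :=
    ((continuous_id.smul continuous_const).add continuous_const).matrix_det
  have hne : ∀ s : ℝ, (s • A + 1).det ≠ 0 := by
    intro s hdet
    obtain ⟨v, hv0, hv⟩ := (Matrix.exists_mulVec_eq_zero_iff).2 hdet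
    have h1 : v ⬝ᵥ (s • A + 1) *ᵥ v = 0 := by rw [hv, dotProduct_zero]
    rw [add_mulVec, one_mulVec, smul_mulVec, dotProduct_add, dotProduct_smul,
      skew_quad hA] at h1
    simp only [smul_eq_mul, mul_zero, zero_add] at h1
    exact hv0 (dotProduct_self_eq_zero.mp h1)
  have h0 : ((0:ℝ) • A + 1).det = 1 := by simp
  intro s hs
  by_contra hle
  push_neg at hle
  have hlt : (s • A + 1).det < 0 := lt_of_le_of_ne hle (hne s)
  have := intermediate_value_Icc' hs hcont.continuousOn
    (Set.mem_Icc.mpr ⟨hlt.le, by rw [h0]; norm_num⟩)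
  obtain ⟨c, _, hfc⟩ := this
  exact hne c hfc

/-- For `t > 0`, `det (A + t • 1) > 0` when `A` is real skew-symmetric. -/
private lemma det_add_smul_one_pos {n : ℕ} {A : Matrix (Fin n) (Fin n) ℝ} (hA : Aᵀ = -A)
    {t : ℝ} (ht : 0 < t) : 0 < (A + t • 1).det := by
  have key : A + t • (1 : Matrix (Fin n) (Fin n) ℝ) = t • (t⁻¹ • A + 1) := by
    rw [smul_add, smul_smul, mul_inv_cancel₀ ht.ne', one_smul]
  rw [key, det_smul]
  have h1 : 0 < (t⁻¹ • A + 1).det := det_one_add_smul_pos hA t⁻¹ (inv_nonneg.mpr ht.le)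
  have h2 : (0:ℝ) < t ^ Fintype.card (Fin n) := pow_pos ht _
  simpa using mul_pos h2 h1

/-- The adjugate of a real skew-symmetric matrix is positive semidefinite (as a quadratic form). -/
private lemma adjugate_quad_nonneg {n : ℕ} {A : Matrix (Fin n) (Fin n) ℝ} (hA : Aᵀ = -A)
    (x : Fin n → ℝ) : 0 ≤ x ⬝ᵥ (A.adjugate) *ᵥ x := by
  set g : ℝ → ℝ := fun t => x ⬝ᵥ (A + t • 1).adjugate *ᵥ x with hg
  have hcont : Continuous g := by
    have h1 : Continuous fun t : ℝ => (A + t • (1 : Matrix (Fin n) (Fin n) ℝ)).adjugate :=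
      (continuous_const.add (continuous_id.smul continuous_const)).matrix_adjugate
    exact (continuous_const.dotProduct (h1.matrix_mulVec continuous_const))
  have hpos : ∀ t ∈ Set.Ioi (0:ℝ), 0 ≤ g t := by
    intro t ht
    replace ht : (0:ℝ) < t := ht
    set M := A + t • (1 : Matrix (Fin n) (Fin n) ℝ) with hM
    have hdet : 0 < M.det := det_add_smul_one_pos hA ht
    have hunit : IsUnit M.det := isUnit_iff_ne_zero.mpr hdet.ne'
    have hadjM : M.adjugate = M.det • M⁻¹ := by
      rw [Matrix.inv_def, Ring.inverse_eq_inv', smul_smul, mul_inv_cancel₀ hdet.ne', one_smul]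
    set z := M⁻¹ *ᵥ x with hz
    have hxz : M *ᵥ z = x := by
      rw [hz, mulVec_mulVec, Matrix.mul_nonsing_inv M hunit, one_mulVec]
    have hzq : x ⬝ᵥ z = t * (z ⬝ᵥ z) := by
      rw [← hxz, dotProduct_comm, hM, add_mulVec, smul_mulVec, one_mulVec,
        dotProduct_add, skew_quad hA, dotProduct_smul]
      simp [smul_eq_mul]
    have : g t = M.det * (t * (z ⬝ᵥ z)) := by
      rw [hg]
      simp only [← hM, hadjM, smul_mulVec, dotProduct_smul, smul_eq_mul, ← hz, hzq]
    rw [this]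
    exact mul_nonneg hdet.le (mul_nonneg ht.le (dp_self_nonneg z))
  have hlim : Filter.Tendsto g (nhdsWithin 0 (Set.Ioi 0)) (nhds (g 0)) :=
    (hcont.tendsto 0).mono_left nhdsWithin_le_nhds
  have h0 : 0 ≤ g 0 :=
    ge_of_tendsto hlim (Filter.eventually_of_mem self_mem_nhdsWithin hpos)
  simpa [hg] using h0

/-- Any two kernel vectors of `A` are collinear when `adjugate A ≠ 0`. -/
private lemma kernel_collinear {n : ℕ} {A : Matrix (Fin n) (Fin n) ℝ}
    (hadj : A.adjugate ≠ 0) {u w : Fin n → ℝ} (hu : A *ᵥ u = 0) (hw : A *ᵥ w = 0)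
    (hune : u ≠ 0) : ∃ a : ℝ, w = a • u := by
  by_contra hc
  push_neg at hc
  apply hadj
  ext i j
  rw [Matrix.adjugate_apply, Matrix.zero_apply]
  -- find a nonzero kernel vector x with x i = 0
  have hx : ∃ x : Fin n → ℝ, x ≠ 0 ∧ A *ᵥ x = 0 ∧ x i = 0 := by
    by_cases hui : u i = 0
    · exact ⟨u, hune, hu, hui⟩
    · refine ⟨w i • u - u i • w, ?_, ?_, ?_⟩
      · intro h
        apply hc (w i / u i)
        funext k
        have hk := congrFun h k
        simp only [Pi.sub_apply, Pi.smul_apply, smul_eq_mul, Pi.zero_apply, sub_eq_zero] at hk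
        simp only [Pi.smul_apply, smul_eq_mul]
        rw [div_mul_eq_mul_div, eq_div_iff hui, hk, mul_comm]
      · rw [mulVec_sub, mulVec_smul, mulVec_smul, hu, hw]; simp
      · simp only [Pi.sub_apply, Pi.smul_apply, smul_eq_mul]; ring
  obtain ⟨x, hx0, hxker, hxi⟩ := hx
  apply (Matrix.exists_mulVec_eq_zero_iff).1
  refine ⟨x, hx0, ?_⟩
  funext k
  by_cases hk : k = j
  · subst hk
    show (A.updateRow k (Pi.single i 1)) k ⬝ᵥ x = 0
    rw [Matrix.updateRow_self, single_dotProduct, one_mul, hxi]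
  · show (A.updateRow j (Pi.single i 1)) k ⬝ᵥ x = 0
    rw [Matrix.updateRow_ne hk]
    exact congrFun hxker k

theorem adjugate_skew_odd_kernel {n : ℕ} (hn : Odd n)
    (A : Matrix (Fin n) (Fin n) ℝ) (hA : Aᵀ = -A) (hadj : A.adjugate ≠ 0) :
    ∃ β : Fin n → ℝ, A.adjugate = vecMulVec β β ∧
      (∀ γ : Fin n → ℝ, A.adjugate = vecMulVec γ γ → γ = β ∨ γ = -β) ∧
      Submodule.span ℝ {β} = LinearMap.ker A.mulVecLin := by
  classical
  set B := A.adjugate with hB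
  have hdetA : A.det = 0 := by
    have h1 : A.det = (-A).det := by rw [← hA, det_transpose]
    rw [det_neg, Fintype.card_fin, hn.neg_one_pow] at h1
    linarith
  have hBsymm : ∀ j k, B k j = B j k := by
    have hT : Bᵀ = B := by
      rw [hB, adjugate_transpose, hA]
      have hneg : (-A) = (-1 : ℝ) • A := by simp
      rw [hneg, adjugate_smul]
      have heven : Even (Fintype.card (Fin n) - 1) := by
        rw [Fintype.card_fin]; exact Nat.Odd.sub_odd hn odd_one
      rw [heven.neg_one_pow, one_smul]
    intro j k
    conv_lhs => rw [← hT]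
    rfl
  have hAB : A * B = 0 := by rw [hB, Matrix.mul_adjugate, hdetA, zero_smul]
  have hcol : ∀ k, A *ᵥ (fun j => B j k) = 0 := by
    intro k
    funext i
    have h := congrFun (congrFun hAB i) k
    simpa [Matrix.mul_apply, Matrix.mulVec, dotProduct] using h
  have hpsd := adjugate_quad_nonneg hA
  have hdiag : ∃ i, B i i ≠ 0 := by
    by_contra hd
    push_neg at hd
    apply hadj
    ext j k
    show B j k = 0
    by_cases hjk : j = k
    · subst hjk; exact hd j
    · have hq : ∀ s : ℝ, 0 ≤ 2 * s * B j k := by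
        intro s
        set x : Fin n → ℝ := Pi.single j 1 + s • (Pi.single k 1 : Fin n → ℝ) with hxdef
        have h := hpsd x
        have hval : x ⬝ᵥ (A.adjugate) *ᵥ x
            = B j j + s * B j k + s * B k j + s * s * B k k := by
          rw [hxdef]
          simp only [mulVec_add, mulVec_smul, mulVec_single_one, Matrix.col_apply, dotProduct_add, add_dotProduct,
            smul_dotProduct, dotProduct_smul, single_dotProduct, Pi.smul_apply, smul_eq_mul,
            mul_one, one_mul, ← hB]
          ring
        rw [hval, hd j, hd k, hBsymm j k] at h
        linarith
      have h1 := hq (-(B j k))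
      nlinarith
  obtain ⟨i₀, hc0⟩ := hdiag
  set c := B i₀ i₀ with hc
  have hcpos : 0 < c := by
    have h := hpsd (Pi.single i₀ 1)
    rw [mulVec_single_one, single_dotProduct] at h
    simp only [one_mul, mul_one, Matrix.col_apply, ← hB] at h
    exact lt_of_le_of_ne h (Ne.symm hc0)
  have hcolne : (fun j => B j i₀) ≠ 0 := by
    intro h
    exact hc0 (congrFun h i₀)
  have key : ∀ j k, B j k * c = B j i₀ * B k i₀ := by
    intro j k
    obtain ⟨a, ha⟩ := kernel_collinear hadj (hcol i₀) (hcol k) hcolne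
    have h1 : B i₀ k = a * c := by
      have := congrFun ha i₀
      simpa using this
    have h2 : B j k = a * B j i₀ := by
      have := congrFun ha j
      simpa using this
    calc B j k * c = B j i₀ * (a * c) := by rw [h2]; ring
    _ = B j i₀ * B i₀ k := by rw [h1]
    _ = B j i₀ * B k i₀ := by rw [hBsymm i₀ k]
  set s := Real.sqrt c with hs
  have hsq : s * s = c := Real.mul_self_sqrt hcpos.le
  have hs0 : s ≠ 0 := by
    intro h
    rw [h, mul_zero] at hsq
    exact hcpos.ne hsq
  set β : Fin n → ℝ := fun j => B j i₀ / s with hβ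
  have hβi₀ : β i₀ = s := by
    rw [hβ]
    show B i₀ i₀ / s = s
    rw [div_eq_iff hs0, hsq]
  have hβne : β ≠ 0 := by
    intro h
    exact hs0 (hβi₀.symm.trans (congrFun h i₀))
  have hβker : A *ᵥ β = 0 := by
    have hβ' : β = s⁻¹ • (fun j => B j i₀) := by
      funext j
      simp [hβ, div_eq_inv_mul]
    rw [hβ', mulVec_smul, hcol i₀, smul_zero]
  have hβeq : A.adjugate = vecMulVec β β := by
    ext j k
    rw [vecMulVec_apply]
    show B j k = β j * β k
    rw [hβ]
    show B j k = B j i₀ / s * (B k i₀ / s)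
    rw [div_mul_div_comm, hsq, ← key j k, mul_div_cancel_right₀ _ hcpos.ne']
  refine ⟨β, hβeq, ?_, ?_⟩
  · intro γ hγ
    have hm : ∀ j k, γ j * γ k = β j * β k := by
      intro j k
      have := congrFun (congrFun (hγ.symm.trans hβeq) j) k
      simpa [vecMulVec_apply] using this
    have h0 : γ i₀ * γ i₀ = β i₀ * β i₀ := hm i₀ i₀
    rcases mul_self_eq_mul_self_iff.mp h0 with hcase | hcase
    · left
      funext j
      have h := hm j i₀
      rw [hcase] at h
      have hβi0 : β i₀ ≠ 0 := by rw [hβi₀]; exact hs0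
      exact mul_right_cancel₀ hβi0 h
    · right
      funext j
      have h := hm j i₀
      rw [hcase] at h
      have hβi0 : β i₀ ≠ 0 := by rw [hβi₀]; exact hs0
      have h' : γ j * β i₀ = (-β j) * β i₀ := by ring_nf; ring_nf at h; linarith
      simpa using mul_right_cancel₀ hβi0 h'
  · apply le_antisymm
    · rw [Submodule.span_le, Set.singleton_subset_iff]
      exact LinearMap.mem_ker.mpr (by simpa [mulVecLin_apply] using hβker)
    · intro w hw
      rw [LinearMap.mem_ker, mulVecLin_apply] at hw
      obtain ⟨a, ha⟩ := kernel_collinear hadj hβker hw hβne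
      rw [Submodule.mem_span_singleton]
      exact ⟨a, ha.symm⟩
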